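/- arXiv:1610.03408 — 2 statements merged into one kernel-verified Lean document; each statement's English description precedes it below -/
import Mathlib

section
/- Let a1 > 0, a2 > 0 and let θ_1, …, θ_k be distributed according to the multiplicative inverse gamma prior with parameters (a1, a2). Then for every m with 0 < m < a1 and 0 < m < a2, and every h ∈ {1, …, k−1}, the difference of consecutive m-th moments satisfies E(θ_{h+1}^m) − E(θ_h^m) = (Γ(a1 − m)/Γ(a1)) · (Γ(a2 − m)/Γ(a2))^{h−1} · (Γ(a2 − m)/Γ(a2) − 1). -/
open MeasureTheory ProbabilityTheory Real Filter Set

/-- Density of the inverse gamma distribution `Inv-Ga(a, b)`: equal to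
`b^a / Γ(a) · x^{-(a+1)} · e^{-b/x}` for `x > 0` and `0` otherwise. -/
noncomputable def invGammaPDF (a b : ℝ) (x : ℝ) : ℝ :=
  if 0 < x then b ^ a / Real.Gamma a * x ^ (-(a + 1)) * Real.exp (-b / x) else 0

/-- The inverse gamma distribution `Inv-Ga(a, b)` as a measure on `ℝ`. -/
noncomputable def invGammaMeasure (a b : ℝ) : Measure ℝ :=
  MeasureTheory.volume.withDensity (fun x => ENNReal.ofReal (invGammaPDF a b x))

open ENNReal NNReal in
lemma invGammaPDF_measurable (a : ℝ) : Measurable (invGammaPDF a 1) := by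
  unfold invGammaPDF
  apply Measurable.ite measurableSet_Ioi <;> fun_prop

open ENNReal NNReal in
lemma invGamma_moment (a m : ℝ) (ha : 0 < a) (ham : m < a) :
    ∫ x, (max x 0) ^ m ∂(invGammaMeasure a 1) = Real.Gamma (a - m) / Real.Gamma a := by
  have hΓ : 0 < Real.Gamma a := Real.Gamma_pos_of_pos ha
  rw [invGammaMeasure]
  rw [show (fun x => ENNReal.ofReal (invGammaPDF a 1 x)) =
      fun x => ((fun y => (invGammaPDF a 1 y).toNNReal) x : ℝ≥0∞) from rfl]
  rw [integral_withDensity_eq_integral_smul (f := fun y => (invGammaPDF a 1 y).toNNReal)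
    (measurable_real_toNNReal.comp (invGammaPDF_measurable a)) _]
  have key : ∀ x : ℝ, (invGammaPDF a 1 x).toNNReal • (max x 0) ^ m =
      Set.indicator (Ioi 0) (fun x => (Real.Gamma a)⁻¹ •
        ((|(-1 : ℝ)| * x ^ ((-1 : ℝ) - 1)) •
          (Real.exp (-(x ^ (-1 : ℝ))) * (x ^ (-1 : ℝ)) ^ (a - m - 1)))) x := by
    intro x
    rw [NNReal.smul_def]
    by_cases hx : 0 < x
    · rw [Set.indicator_of_mem (mem_Ioi.mpr hx), smul_eq_mul]
      simp only [smul_eq_mul]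
      rw [invGammaPDF, if_pos hx, Real.one_rpow]
      rw [Real.coe_toNNReal _ (by positivity)]
      rw [max_eq_left hx.le]
      rw [Real.rpow_neg_one x, Real.inv_rpow hx.le, ← Real.rpow_neg hx.le, abs_neg, abs_one]
      have e2 : x ^ (-(a + 1)) * x ^ m = x ^ ((-1 : ℝ) - 1) * x ^ (-(a - m - 1)) := by
        rw [← Real.rpow_add hx, ← Real.rpow_add hx]; ring_nf
      rw [show (-1 : ℝ) / x = -x⁻¹ by rw [neg_div, one_div], one_div]
      linear_combination ((Real.Gamma a)⁻¹ * Real.exp (-x⁻¹)) * e2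
    · rw [Set.indicator_of_notMem (by simpa using hx)]
      rw [invGammaPDF, if_neg hx]
      simp
  rw [integral_congr_ae (ae_of_all _ key)]
  rw [integral_indicator measurableSet_Ioi, integral_smul]
  rw [integral_comp_rpow_Ioi (fun y => Real.exp (-y) * y ^ (a - m - 1)) (by norm_num : (-1:ℝ) ≠ 0)]
  rw [← Real.Gamma_eq_integral (by linarith)]
  rw [smul_eq_mul, inv_mul_eq_div]

lemma invGamma_nonpos_null (a : ℝ) : invGammaMeasure a 1 (Iic 0) = 0 := by
  rw [invGammaMeasure, withDensity_apply _ measurableSet_Iic]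
  rw [setLIntegral_congr_fun measurableSet_Iic
    (fun x (hx : x ∈ Iic (0:ℝ)) => by
      rw [invGammaPDF, if_neg (not_lt.mpr hx), ENNReal.ofReal_zero])]
  simp

/-- difference of consecutive `m`-th moments of the multiplicative inverse
gamma prior. -/
theorem multiplicative_inverse_gamma_moment_difference
    {Ω : Type*} [MeasureSpace Ω] [IsProbabilityMeasure (ℙ : Measure Ω)]
    (a1 a2 : ℝ) (ha1 : 0 < a1) (ha2 : 0 < a2)
    (k : ℕ) (ϑ : ℕ → Ω → ℝ)
    (hmeas : ∀ l, Measurable (ϑ l))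
    (hindep : iIndepFun ϑ ℙ)
    (hlaw1 : Measure.map (ϑ 0) ℙ = invGammaMeasure a1 1)
    (hlaw2 : ∀ l, 1 ≤ l → Measure.map (ϑ l) ℙ = invGammaMeasure a2 1)
    (m : ℝ) (hm0 : 0 < m) (hma1 : m < a1) (hma2 : m < a2) :
    ∀ h, 1 ≤ h → h ≤ k - 1 →
      (∫ ω, (∏ l ∈ Finset.range (h + 1), ϑ l ω) ^ m ∂ℙ) -
          ∫ ω, (∏ l ∈ Finset.range h, ϑ l ω) ^ m ∂ℙ =
        Real.Gamma (a1 - m) / Real.Gamma a1 *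
          (Real.Gamma (a2 - m) / Real.Gamma a2) ^ (h - 1) *
          (Real.Gamma (a2 - m) / Real.Gamma a2 - 1) := by
  intro h hh1 _
  set g : ℝ → ℝ := fun x => (max x 0) ^ m with hg_def
  have hg : Measurable g := by unfold g; fun_prop
  set X : ℕ → Ω → ℝ := fun l => g ∘ ϑ l with hX_def
  have hXmeas : ∀ l, Measurable (X l) := fun l => hg.comp (hmeas l)
  have hXindep : iIndepFun X ℙ :=
    hindep.comp (fun _ => g) (fun _ => hg)
  have hXnn : ∀ l, (0 : Ω → ℝ) ≤ X l := fun l ω => Real.rpow_nonneg (le_max_right _ _) m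
  -- integral of finite products splits
  have hprod : ∀ n, ∫ ω, ∏ l ∈ Finset.range n, X l ω ∂ℙ =
      ∏ l ∈ Finset.range n, ∫ ω, X l ω ∂ℙ := by
    intro n
    induction n with
    | zero => simp
    | succ n ih =>
      have hind := hXindep.indepFun_prod_range_succ hXmeas n
      have e : (∏ j ∈ Finset.range n, X j) = fun ω => ∏ j ∈ Finset.range n, X j ω := by
        funext ω; exact Finset.prod_apply ω (Finset.range n) X
      have heq := hind.integral_mul_eq_mul_integral
        (by rw [e]; exact (Finset.measurable_prod _ fun l _ => hXmeas l).aestronglyMeasurable)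
        ((hXmeas n).aestronglyMeasurable)
      simp only [Finset.prod_range_succ]
      calc ∫ ω, (∏ l ∈ Finset.range n, X l ω) * X n ω ∂ℙ
          = ∫ ω, ((∏ l ∈ Finset.range n, X l) * X n) ω ∂ℙ := by
            congr 1; funext ω; simp [Finset.prod_apply]
        _ = (∫ ω, (∏ l ∈ Finset.range n, X l) ω ∂ℙ) * ∫ ω, X n ω ∂ℙ := heq
        _ = (∏ l ∈ Finset.range n, ∫ ω, X l ω ∂ℙ) * ∫ ω, X n ω ∂ℙ := by
            rw [← ih]; congr 1; apply integral_congr_ae; filter_upwards with ω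
            simp [Finset.prod_apply]
  -- each moment
  have hmom : ∀ l, ∫ ω, X l ω ∂ℙ =
      if l = 0 then Real.Gamma (a1 - m) / Real.Gamma a1
      else Real.Gamma (a2 - m) / Real.Gamma a2 := by
    intro l
    have h1 : ∫ ω, X l ω ∂ℙ = ∫ x, g x ∂(Measure.map (ϑ l) ℙ) :=
      (integral_map (hmeas l).aemeasurable hg.aestronglyMeasurable).symm
    rcases Nat.eq_zero_or_pos l with h0 | h0
    · rw [if_pos h0, h1, h0, hlaw1]; exact invGamma_moment a1 m ha1 hma1
    · rw [if_neg h0.ne', h1, hlaw2 l h0]; exact invGamma_moment a2 m ha2 hma2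
  -- a.e. positivity and rewriting the powers of products
  have hpos : ∀ l, ∀ᵐ ω ∂ℙ, 0 < ϑ l ω := by
    intro l
    have hnull : ℙ (ϑ l ⁻¹' (Iic 0)) = 0 := by
      rw [← Measure.map_apply (hmeas l) measurableSet_Iic]
      rcases Nat.eq_zero_or_pos l with h0 | h0
      · rw [h0, hlaw1]; exact invGamma_nonpos_null a1
      · rw [hlaw2 l h0]; exact invGamma_nonpos_null a2
    rw [ae_iff]
    convert hnull using 2
    ext ω
    simp [not_lt]
  have hae : ∀ n, ∫ ω, (∏ l ∈ Finset.range n, ϑ l ω) ^ m ∂ℙ =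
      ∫ ω, ∏ l ∈ Finset.range n, X l ω ∂ℙ := by
    intro n
    apply integral_congr_ae
    filter_upwards [ae_all_iff.mpr hpos] with ω hω
    rw [← Real.finset_prod_rpow _ _ (fun l _ => (hω l).le) m]
    refine Finset.prod_congr rfl fun l _ => ?_
    simp only [hX_def, hg_def, Function.comp_apply, max_eq_left (hω l).le]
  -- put everything together
  rw [hae, hae, hprod, hprod]
  have hsplit : ∀ n, ∏ l ∈ Finset.range (n + 1), ∫ ω, X l ω ∂ℙ =
      Real.Gamma (a1 - m) / Real.Gamma a1 *
        (Real.Gamma (a2 - m) / Real.Gamma a2) ^ n := by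
    intro n
    rw [Finset.prod_range_succ', hmom 0, if_pos rfl,
      Finset.prod_congr rfl (fun l _ => (hmom (l + 1)).trans (if_neg (Nat.succ_ne_zero l))),
      Finset.prod_const, Finset.card_range]
    ring
  obtain ⟨j, rfl⟩ : ∃ j, h = j + 1 := ⟨h - 1, (Nat.succ_pred_eq_of_pos hh1).symm⟩
  rw [hsplit, hsplit]
  simp only [Nat.add_sub_cancel]
  ring
end

section
/- Let a1 > 0 and a2 > 0, and let ϑ_1 ~ Inv-Ga(a1, 1) and ϑ_2 ~ Inv-Ga(a2, 1) be independent real random variables. Then the law of the product θ_2 = ϑ_1·ϑ_2 has density on (0, ∞) given by θ ↦ (θ^{−a2−1} / (Γ(a1)·Γ(a2))) · ∫_0^∞ x^{−(a1−a2+1)} · e^{−1/x − x/θ} dx; that is, for every θ > 0, P(ϑ_1·ϑ_2 ≤ θ) = ∫_0^θ (t^{−a2−1}/(Γ(a1)Γ(a2))) · (∫_0^∞ x^{−(a1−a2+1)} e^{−1/x − x/t} dx) dt. -/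
open MeasureTheory ProbabilityTheory Real Filter Set
open scoped ENNReal NNReal

lemma measurable_invGammaPDF (a b : ℝ) : Measurable (invGammaPDF a b) := by
  unfold invGammaPDF
  apply Measurable.ite
  · exact measurableSet_Ioi
  · fun_prop
  · exact measurable_const

lemma invGammaPDF_nonneg {a : ℝ} (ha : 0 < a) (x : ℝ) : 0 ≤ invGammaPDF a 1 x := by
  unfold invGammaPDF
  split
  · have hΓ := Real.Gamma_pos_of_pos ha
    positivity
  · exact le_refl 0

-- scaling change of variables for lintegral on Ioc
lemma lintegral_Ioc_scale {F : ℝ → ℝ≥0∞} (hF : Measurable F) {x : ℝ} (hx : 0 < x) (θ : ℝ) :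
    ∫⁻ y in Ioc (0:ℝ) (θ / x), F y =
      ENNReal.ofReal x⁻¹ * ∫⁻ t in Ioc (0:ℝ) θ, F (t / x) := by
  have hg : Measurable fun t : ℝ => x⁻¹ * t := by fun_prop
  have hpre : (fun t : ℝ => x⁻¹ * t) ⁻¹' (Ioc 0 (θ / x)) = Ioc 0 θ := by
    rw [preimage_const_mul_Ioc₀ 0 (θ / x) (inv_pos.2 hx), zero_div]
    field_simp
  have hmap : Measure.map (fun t : ℝ => x⁻¹ * t) volume = ENNReal.ofReal x • volume := by
    rw [Real.map_volume_mul_left (inv_ne_zero hx.ne')]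
    congr 1
    rw [inv_inv, abs_of_pos hx]
  have h1 : ∫⁻ y in Ioc (0:ℝ) (θ / x), F y ∂(Measure.map (fun t : ℝ => x⁻¹ * t) volume) =
      ∫⁻ t in Ioc (0:ℝ) θ, F (x⁻¹ * t) := by
    rw [Measure.restrict_map hg measurableSet_Ioc, lintegral_map hF hg, hpre]
  rw [hmap, Measure.restrict_smul, lintegral_smul_measure, smul_eq_mul] at h1
  simp_rw [inv_mul_eq_div] at h1
  rw [← h1, ← mul_assoc, ← ENNReal.ofReal_mul (inv_nonneg.2 hx.le),
    inv_mul_cancel₀ hx.ne', ENNReal.ofReal_one, one_mul]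

-- integrals against the pdf vanish off (0, ∞)
lemma lintegral_pdf_mul (a b : ℝ) (g : ℝ → ℝ≥0∞) :
    ∫⁻ x, ENNReal.ofReal (invGammaPDF a b x) * g x =
      ∫⁻ x in Ioi (0:ℝ), ENNReal.ofReal (invGammaPDF a b x) * g x := by
  rw [← lintegral_indicator measurableSet_Ioi]
  apply lintegral_congr
  intro x
  by_cases hx : 0 < x
  · simp [indicator, hx]
  · simp [indicator, hx, invGammaPDF]

lemma setLIntegral_pdf (a b : ℝ) {s : Set ℝ} (hs : MeasurableSet s) :
    ∫⁻ y in s, ENNReal.ofReal (invGammaPDF a b y) =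
      ∫⁻ y in s ∩ Ioi 0, ENNReal.ofReal (invGammaPDF a b y) := by
  rw [← lintegral_indicator hs, ← lintegral_indicator (hs.inter measurableSet_Ioi)]
  apply lintegral_congr
  intro y
  by_cases hy : 0 < y <;> by_cases hys : y ∈ s <;>
    simp [indicator, hy, hys, mem_inter_iff, mem_Ioi, invGammaPDF]

lemma integrable_inner (p : ℝ) {t : ℝ} (ht : 0 < t) :
    IntegrableOn (fun x : ℝ => x ^ p * Real.exp (-1 / x - x / t)) (Ioi (0:ℝ)) := by
  have hmeas : Measurable fun x : ℝ => x ^ p * Real.exp (-1 / x - x / t) := by fun_prop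
  rw [← Ioc_union_Ioi_eq_Ioi (zero_le_one : (0:ℝ) ≤ 1)]
  apply IntegrableOn.union
  · -- Ioc 0 1
    set n : ℕ := ⌈-p⌉₊ + 1 with hn
    have hn0 : 0 < (n:ℝ) := by positivity
    have hexp : (-1:ℝ) < p + n := by
      have := Nat.le_ceil (-p)
      push_cast [hn]
      push_cast at this
      linarith
    apply Integrable.mono' (g := fun x => (n:ℝ)^n * x ^ (p + n))
    · apply Integrable.const_mul
      have h := intervalIntegral.intervalIntegrable_rpow' (a := 0) (b := 1) hexp
      rwa [intervalIntegrable_iff_integrableOn_Ioc_of_le zero_le_one] at h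
    · exact hmeas.aestronglyMeasurable
    · filter_upwards [ae_restrict_mem measurableSet_Ioc] with x hx
      obtain ⟨hx0, hx1⟩ := hx
      have h1 : Real.exp (-1/x - x/t) ≤ Real.exp (-1/x) := by
        apply Real.exp_le_exp.2
        have : 0 ≤ x / t := by positivity
        linarith
      have h2 : Real.exp (-1/x) ≤ ((n:ℝ) * x) ^ n := by
        have hu : 0 < 1/((n:ℝ)*x) := by positivity
        have hle : 1/((n:ℝ)*x) ≤ Real.exp (1/((n:ℝ)*x)) := by
          linarith [Real.add_one_le_exp (1/((n:ℝ)*x))]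
        have hpow : (1/((n:ℝ)*x))^n ≤ (Real.exp (1/((n:ℝ)*x)))^n :=
          pow_le_pow_left₀ hu.le hle n
        rw [← Real.exp_nat_mul] at hpow
        have harg : (n:ℝ) * (1/((n:ℝ)*x)) = 1/x := by field_simp
        rw [harg] at hpow
        calc Real.exp (-1/x) = (Real.exp (1/x))⁻¹ := by rw [neg_div, Real.exp_neg]
          _ ≤ ((1/((n:ℝ)*x))^n)⁻¹ := inv_anti₀ (by positivity) hpow
          _ = ((n:ℝ)*x)^n := by rw [one_div, inv_pow, inv_inv]
      rw [Real.norm_of_nonneg (mul_nonneg (Real.rpow_nonneg hx0.le p) (Real.exp_pos _).le)]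
      calc x ^ p * Real.exp (-1/x - x/t) ≤ x ^ p * (((n:ℝ)*x)^n) := by
            apply mul_le_mul_of_nonneg_left (h1.trans h2) (Real.rpow_nonneg hx0.le p)
        _ = (n:ℝ)^n * (x ^ p * x ^ (n:ℕ)) := by rw [mul_pow]; ring
        _ = (n:ℝ)^n * x ^ (p + n) := by
            rw [← Real.rpow_natCast x n, ← Real.rpow_add hx0]
  · -- Ioi 1
    set m : ℕ := ⌈p⌉₊ with hm
    have hbase : IntegrableOn (fun x : ℝ => x ^ (m:ℝ) * Real.exp (-(1/t) * x)) (Ioi (0:ℝ)) := by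
      have h := integrableOn_rpow_mul_exp_neg_mul_rpow (s := (m:ℝ)) (p := 1) (b := 1/t)
        (by linarith [Nat.cast_nonneg (α:=ℝ) m]) zero_lt_one (by positivity)
      simpa [Real.rpow_one] using h
    apply Integrable.mono' (hbase.mono_set (Ioi_subset_Ioi zero_le_one))
    · exact hmeas.aestronglyMeasurable
    · filter_upwards [ae_restrict_mem measurableSet_Ioi] with x hx
      have hx0 : (0:ℝ) < x := zero_lt_one.trans hx
      have h1 : x ^ p ≤ x ^ (m:ℝ) := Real.rpow_le_rpow_of_exponent_le hx.le (Nat.le_ceil p)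
      have h2 : Real.exp (-1/x - x/t) ≤ Real.exp (-(1/t) * x) := by
        apply Real.exp_le_exp.2
        have h3 : -(1/t) * x = -(x/t) := by ring
        have h4 : 0 < 1/x := by positivity
        rw [h3]
        have : -1/x = -(1/x) := by ring
        linarith
      rw [Real.norm_of_nonneg (mul_nonneg (Real.rpow_nonneg hx0.le p) (Real.exp_pos _).le)]
      exact mul_le_mul h1 h2 (Real.exp_pos _).le (Real.rpow_nonneg hx0.le _)

-- pointwise algebra
lemma pdf_algebra (a1 a2 : ℝ) {t x : ℝ} (ht : 0 < t) (hx : 0 < x) :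
    invGammaPDF a1 1 x * (invGammaPDF a2 1 (t / x) * x⁻¹) =
      t ^ (-a2 - 1) / (Real.Gamma a1 * Real.Gamma a2) *
        (x ^ (-(a1 - a2 + 1)) * Real.exp (-1 / x - x / t)) := by
  have htx : 0 < t / x := div_pos ht hx
  rw [invGammaPDF, invGammaPDF, if_pos hx, if_pos htx]
  simp only [Real.one_rpow]
  have e1 : (t / x) ^ (-(a2 + 1)) = t ^ (-(a2 + 1)) * (x ^ (a2 + 1)) := by
    rw [Real.div_rpow ht.le hx.le, div_eq_mul_inv, ← Real.rpow_neg hx.le, neg_neg]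
  have e2 : (-1 : ℝ) / (t / x) = -(x / t) := by
    rw [div_div_eq_mul_div]; ring
  have e3 : x ^ (-(a1 + 1)) * x ^ (a2 + 1) * x⁻¹ = x ^ (-(a1 - a2 + 1)) := by
    rw [← Real.rpow_neg_one x, ← Real.rpow_add hx, ← Real.rpow_add hx]
    congr 1; ring
  have e4 : Real.exp (-1 / x) * Real.exp (-(x / t)) = Real.exp (-1 / x - x / t) := by
    rw [← Real.exp_add, ← sub_eq_add_neg]
  have e5 : t ^ (-a2 - 1) = t ^ (-(a2 + 1)) := by congr 1; ring
  rw [e1, e2, e5]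
  calc (1 / Real.Gamma a1 * x ^ (-(a1 + 1)) * Real.exp (-1 / x)) *
        (1 / Real.Gamma a2 * (t ^ (-(a2 + 1)) * x ^ (a2 + 1)) * Real.exp (-(x / t)) * x⁻¹)
      = t ^ (-(a2 + 1)) / (Real.Gamma a1 * Real.Gamma a2) *
        ((x ^ (-(a1 + 1)) * x ^ (a2 + 1) * x⁻¹) * (Real.exp (-1 / x) * Real.exp (-(x / t)))) := by
        ring
    _ = _ := by rw [e3, e4]

/-- the CDF of the product `ϑ_1·ϑ_2` of independent `Inv-Ga(a1, 1)` and
`Inv-Ga(a2, 1)` variables is given by integrating the density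
`θ ↦ (θ^{-a2-1}/(Γ(a1)Γ(a2))) ∫_0^∞ x^{-(a1-a2+1)} e^{-1/x - x/θ} dx` over `(0, θ]`. -/
theorem invGamma_product_density
    {Ω : Type*} [MeasureSpace Ω] [IsProbabilityMeasure (ℙ : Measure Ω)]
    (a1 a2 : ℝ) (ha1 : 0 < a1) (ha2 : 0 < a2)
    (ϑ₁ ϑ₂ : Ω → ℝ) (hmeas₁ : Measurable ϑ₁) (hmeas₂ : Measurable ϑ₂)
    (hindep : IndepFun ϑ₁ ϑ₂ ℙ)
    (hlaw₁ : Measure.map ϑ₁ ℙ = invGammaMeasure a1 1)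
    (hlaw₂ : Measure.map ϑ₂ ℙ = invGammaMeasure a2 1) :
    ∀ θ : ℝ, 0 < θ →
      (ℙ {ω | ϑ₁ ω * ϑ₂ ω ≤ θ}).toReal =
        ∫ t in Set.Ioc (0 : ℝ) θ,
          t ^ (-a2 - 1) / (Real.Gamma a1 * Real.Gamma a2) *
            ∫ x in Set.Ioi (0 : ℝ), x ^ (-(a1 - a2 + 1)) * Real.exp (-1 / x - x / t) := by
  intro θ hθ
  have hΓ1 := Real.Gamma_pos_of_pos ha1
  have hΓ2 := Real.Gamma_pos_of_pos ha2
  haveI hprob2 : IsProbabilityMeasure (invGammaMeasure a2 1) :=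
    hlaw₂ ▸ Measure.isProbabilityMeasure_map hmeas₂.aemeasurable
  have hS : MeasurableSet {p : ℝ × ℝ | p.1 * p.2 ≤ θ} :=
    measurableSet_le (measurable_fst.mul measurable_snd) measurable_const
  have hmap : ℙ {ω | ϑ₁ ω * ϑ₂ ω ≤ θ}
      = ((invGammaMeasure a1 1).prod (invGammaMeasure a2 1)) {p : ℝ × ℝ | p.1 * p.2 ≤ θ} := by
    rw [← hlaw₁, ← hlaw₂,
      ← (indepFun_iff_map_prod_eq_prod_map_map hmeas₁.aemeasurable hmeas₂.aemeasurable).mp hindep,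
      Measure.map_apply (hmeas₁.prodMk hmeas₂) hS]
    rfl
  -- measurability facts
  have hm1 : Measurable fun x => ENNReal.ofReal (invGammaPDF a1 1 x) :=
    (measurable_invGammaPDF a1 1).ennreal_ofReal
  have hm2 : Measurable fun y => ENNReal.ofReal (invGammaPDF a2 1 y) :=
    (measurable_invGammaPDF a2 1).ennreal_ofReal
  -- the main computation in ℝ≥0∞
  have key : ((invGammaMeasure a1 1).prod (invGammaMeasure a2 1)) {p : ℝ × ℝ | p.1 * p.2 ≤ θ}
      = ∫⁻ t in Ioc (0:ℝ) θ, ENNReal.ofReal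
          (t ^ (-a2 - 1) / (Real.Gamma a1 * Real.Gamma a2) *
            ∫ x in Ioi (0:ℝ), x ^ (-(a1 - a2 + 1)) * Real.exp (-1 / x - x / t)) := by
    rw [Measure.prod_apply hS]
    have hgm : Measurable fun x : ℝ =>
        (invGammaMeasure a2 1) (Prod.mk x ⁻¹' {p : ℝ × ℝ | p.1 * p.2 ≤ θ}) :=
      measurable_measure_prodMk_left hS
    rw [show (invGammaMeasure a1 1) = volume.withDensity
        (fun x => ENNReal.ofReal (invGammaPDF a1 1 x)) from rfl,
      lintegral_withDensity_eq_lintegral_mul volume hm1 hgm]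
    simp only [Pi.mul_apply]
    rw [lintegral_pdf_mul a1 1]
    have step1 : ∫⁻ x in Ioi (0:ℝ), ENNReal.ofReal (invGammaPDF a1 1 x) *
        (invGammaMeasure a2 1) (Prod.mk x ⁻¹' {p : ℝ × ℝ | p.1 * p.2 ≤ θ})
        = ∫⁻ x in Ioi (0:ℝ), ∫⁻ t in Ioc (0:ℝ) θ,
            ENNReal.ofReal (invGammaPDF a1 1 x * (invGammaPDF a2 1 (t / x) * x⁻¹)) := by
      apply setLIntegral_congr_fun_ae measurableSet_Ioi
      apply ae_of_all
      intro x hx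
      have hx0 : (0:ℝ) < x := hx
      have hsm : MeasurableSet {y : ℝ | x * y ≤ θ} :=
        measurableSet_le (measurable_const.mul measurable_id) measurable_const
      have hset : {y : ℝ | x * y ≤ θ} ∩ Ioi 0 = Ioc 0 (θ / x) := by
        ext y
        simp only [mem_inter_iff, mem_setOf_eq, mem_Ioi, mem_Ioc]
        constructor
        · rintro ⟨h1, h2⟩
          exact ⟨h2, (le_div_iff₀ hx0).2 (by rw [mul_comm]; exact h1)⟩
        · rintro ⟨h1, h2⟩
          exact ⟨by rw [mul_comm]; exact (le_div_iff₀ hx0).1 h2, h1⟩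
      have hμ2 : (invGammaMeasure a2 1) (Prod.mk x ⁻¹' {p : ℝ × ℝ | p.1 * p.2 ≤ θ})
          = ∫⁻ t in Ioc (0:ℝ) θ, ENNReal.ofReal (invGammaPDF a2 1 (t / x)) *
              ENNReal.ofReal x⁻¹ := by
        have hpre : Prod.mk x ⁻¹' {p : ℝ × ℝ | p.1 * p.2 ≤ θ} = {y : ℝ | x * y ≤ θ} := rfl
        rw [hpre, invGammaMeasure, withDensity_apply _ hsm, setLIntegral_pdf a2 1 hsm, hset,
          lintegral_Ioc_scale hm2 hx0 θ]
        have hmm : Measurable fun t : ℝ => ENNReal.ofReal (invGammaPDF a2 1 (t / x)) :=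
          hm2.comp (measurable_id.div_const x)
        rw [← lintegral_const_mul _ hmm]
        apply lintegral_congr
        intro t
        ring
      have hmm2 : Measurable fun t : ℝ =>
          ENNReal.ofReal (invGammaPDF a2 1 (t / x)) * ENNReal.ofReal x⁻¹ :=
        (hm2.comp (measurable_id.div_const x)).mul measurable_const
      rw [hμ2, ← lintegral_const_mul _ hmm2]
      apply lintegral_congr
      intro t
      rw [ENNReal.ofReal_mul (invGammaPDF_nonneg ha1 x),
        ENNReal.ofReal_mul (invGammaPDF_nonneg ha2 (t / x))]
    rw [step1]
    have hH : Measurable (Function.uncurry fun (x t : ℝ) =>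
        ENNReal.ofReal (invGammaPDF a1 1 x * (invGammaPDF a2 1 (t / x) * x⁻¹))) := by
      apply Measurable.ennreal_ofReal
      exact (((measurable_invGammaPDF a1 1).comp measurable_fst).mul
        (((measurable_invGammaPDF a2 1).comp (measurable_snd.div measurable_fst)).mul
          measurable_fst.inv))
    rw [lintegral_lintegral_swap hH.aemeasurable]
    apply setLIntegral_congr_fun_ae measurableSet_Ioc
    apply ae_of_all
    intro t ht
    have ht0 : (0:ℝ) < t := ht.1
    have hinner_meas : Measurable fun x : ℝ =>
        ENNReal.ofReal (x ^ (-(a1 - a2 + 1)) * Real.exp (-1 / x - x / t)) := by fun_prop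
    calc ∫⁻ x in Ioi (0:ℝ),
          ENNReal.ofReal (invGammaPDF a1 1 x * (invGammaPDF a2 1 (t / x) * x⁻¹))
        = ∫⁻ x in Ioi (0:ℝ), ENNReal.ofReal
            (t ^ (-a2 - 1) / (Real.Gamma a1 * Real.Gamma a2)) *
          ENNReal.ofReal (x ^ (-(a1 - a2 + 1)) * Real.exp (-1 / x - x / t)) := by
          apply setLIntegral_congr_fun_ae measurableSet_Ioi
          apply ae_of_all
          intro x hx
          rw [pdf_algebra a1 a2 ht0 hx, ENNReal.ofReal_mul
            (div_nonneg (Real.rpow_nonneg ht0.le _) (mul_pos hΓ1 hΓ2).le)]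
      _ = ENNReal.ofReal (t ^ (-a2 - 1) / (Real.Gamma a1 * Real.Gamma a2)) *
          ∫⁻ x in Ioi (0:ℝ),
            ENNReal.ofReal (x ^ (-(a1 - a2 + 1)) * Real.exp (-1 / x - x / t)) := by
          rw [lintegral_const_mul _ hinner_meas]
      _ = ENNReal.ofReal (t ^ (-a2 - 1) / (Real.Gamma a1 * Real.Gamma a2)) *
          ENNReal.ofReal
            (∫ x in Ioi (0:ℝ), x ^ (-(a1 - a2 + 1)) * Real.exp (-1 / x - x / t)) := by
          rw [← ofReal_integral_eq_lintegral_ofReal (integrable_inner _ ht0)]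
          filter_upwards [ae_restrict_mem measurableSet_Ioi] with x hx
          exact mul_nonneg (Real.rpow_nonneg (le_of_lt hx) _) (Real.exp_pos _).le
      _ = ENNReal.ofReal (t ^ (-a2 - 1) / (Real.Gamma a1 * Real.Gamma a2) *
            ∫ x in Ioi (0:ℝ), x ^ (-(a1 - a2 + 1)) * Real.exp (-1 / x - x / t)) := by
          rw [← ENNReal.ofReal_mul
            (div_nonneg (Real.rpow_nonneg ht0.le _) (mul_pos hΓ1 hΓ2).le)]
  -- convert to Bochner integral
  have h_nn : 0 ≤ᵐ[volume.restrict (Ioc (0:ℝ) θ)] fun t =>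
      t ^ (-a2 - 1) / (Real.Gamma a1 * Real.Gamma a2) *
        ∫ x in Ioi (0:ℝ), x ^ (-(a1 - a2 + 1)) * Real.exp (-1 / x - x / t) := by
    filter_upwards [ae_restrict_mem measurableSet_Ioc] with t ht
    apply mul_nonneg (div_nonneg (Real.rpow_nonneg ht.1.le _) (mul_pos hΓ1 hΓ2).le)
    apply setIntegral_nonneg measurableSet_Ioi
    intro x hx
    exact mul_nonneg (Real.rpow_nonneg (le_of_lt hx) _) (Real.exp_pos _).le
  have h_sm : AEStronglyMeasurable (fun t =>
      t ^ (-a2 - 1) / (Real.Gamma a1 * Real.Gamma a2) *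
        ∫ x in Ioi (0:ℝ), x ^ (-(a1 - a2 + 1)) * Real.exp (-1 / x - x / t))
      (volume.restrict (Ioc (0:ℝ) θ)) := by
    apply AEStronglyMeasurable.mul
    · exact (by fun_prop :
        Measurable fun t : ℝ => t ^ (-a2 - 1) / (Real.Gamma a1 * Real.Gamma a2)).aestronglyMeasurable
    · have : StronglyMeasurable fun t : ℝ =>
          ∫ x in Ioi (0:ℝ), x ^ (-(a1 - a2 + 1)) * Real.exp (-1 / x - x / t) := by
        apply MeasureTheory.StronglyMeasurable.integral_prod_right'
          (f := fun p : ℝ × ℝ => p.2 ^ (-(a1 - a2 + 1)) * Real.exp (-1 / p.2 - p.2 / p.1))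
        apply Measurable.stronglyMeasurable
        fun_prop
      exact this.aestronglyMeasurable
  rw [hmap, key, integral_eq_lintegral_of_nonneg_ae h_nn h_sm]
end
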